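/- Let d ≥ 1 be a real number and x₀ ∈ ℝ. There is no function v : [0,∞) × ℝ → ℝ with the following properties: (a) v, ∂_x v, ∂_x² v, ∂_t v, ∂_t∂_x v exist and are continuous on [0,∞) × ℝ, with ∂_t∂_x v = ∂_x∂_t v; (b) for each t ≥ 0 the functions v(t,·) and (∂_x v)(t,·) are square-integrable on ℝ, v(t,ξ) → 0 as ξ → +∞ and as ξ → −∞, and ∫_ℝ( v(t,ξ)² + d·(∂_x v)(t,ξ)² )dξ ≤ ∫_ℝ( v(0,ξ)² + d·(∂_x v)(0,ξ)² )dξ; (c) setting P(t,x) = ∫_ℝ p_d(x − ξ)·( d·v(t,ξ)² + (d²/2)·(∂_x v)(t,ξ)² ) dξ, the equation ∂_t v + d·v·∂_x v = −∂_x P holds at every point of [0,∞) × ℝ; (d) there exists a differentiable q : [0,∞) → ℝ with q(0) = x₀ and q'(t) = d·v(t, q(t)) for all t ≥ 0; (e) (∂_x v)(0, x₀) < −(1/√d)·|v(0, x₀)|. -/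

import Mathlib

open MeasureTheory Set Filter

/-- The kernel `p_d(x) = (1/(2√d)) exp(-|x|/√d)`. -/
noncomputable def pd (d : ℝ) (x : ℝ) : ℝ :=
  1 / (2 * Real.sqrt d) * Real.exp (-|x| / Real.sqrt d)

private lemma aux_abs1 (r f w w1 : ℝ) (r3pos : 0 < r^3) (hr23 : r^2 ≤ r^3)
    (hf1 : w^2 ≤ f) (hf2 : w1^2 ≤ 2*f) :
    |r^2/2*w^2 + r^3*(w*w1)| ≤ 4*r^3*f := by
  rw [abs_le]
  constructor <;>
  nlinarith [mul_le_mul_of_nonneg_left hf1 r3pos.le,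
    mul_le_mul_of_nonneg_left hf2 r3pos.le,
    mul_nonneg r3pos.le (sq_nonneg (w + w1)),
    mul_nonneg r3pos.le (sq_nonneg (w - w1)),
    mul_nonneg (sub_nonneg.2 hr23) (sq_nonneg w),
    mul_nonneg r3pos.le (sq_nonneg w),
    mul_nonneg r3pos.le (sq_nonneg w1)]

private lemma aux_abs2 (r f w w1 : ℝ) (r3pos : 0 < r^3) (hr23 : r^2 ≤ r^3)
    (hf1 : w^2 ≤ f) (hf2 : w1^2 ≤ 2*f) :
    |(-(r^2/2))*w^2 + r^3*(w*w1)| ≤ 4*r^3*f := by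
  rw [abs_le]
  constructor <;>
  nlinarith [mul_le_mul_of_nonneg_left hf1 r3pos.le,
    mul_le_mul_of_nonneg_left hf2 r3pos.le,
    mul_nonneg r3pos.le (sq_nonneg (w + w1)),
    mul_nonneg r3pos.le (sq_nonneg (w - w1)),
    mul_nonneg (sub_nonneg.2 hr23) (sq_nonneg w),
    mul_nonneg r3pos.le (sq_nonneg w),
    mul_nonneg r3pos.le (sq_nonneg w1)]

private lemma aux_gle1 (r E w w1 : ℝ) (hE : 0 ≤ E) :
    E * (r^2/2*w^2 + r^3*(w*w1)) ≤ E * (r^2*w^2 + (r^2)^2/2*w1^2) := by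
  nlinarith [mul_nonneg hE (sq_nonneg (r*w - r^2*w1))]

private lemma aux_gle2 (r E w w1 : ℝ) (hE : 0 ≤ E) :
    -(E * (r^2*w^2 + (r^2)^2/2*w1^2)) ≤ E * ((-(r^2/2))*w^2 + r^3*(w*w1)) := by
  nlinarith [mul_nonneg hE (sq_nonneg (r*w + r^2*w1))]

set_option maxHeartbeats 1600000 in
lemma kernel_main (d : ℝ) (hd : 1 ≤ d) (w w₁ : ℝ → ℝ)
    (hw : ∀ x, HasDerivAt w (w₁ x) x)
    (hw₁c : Continuous w₁)
    (hint : Integrable (fun ξ => (w ξ)^2))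
    (hint1 : Integrable (fun ξ => (w₁ ξ)^2))
    (htop : Tendsto w atTop (nhds 0))
    (hbot : Tendsto w atBot (nhds 0)) :
    ∃ P P' : ℝ → ℝ,
      (∀ x, (∫ ξ : ℝ, pd d (x - ξ) * (d * (w ξ)^2 + d^2/2 * (w₁ ξ)^2)) = P x) ∧
      (∀ x, HasDerivAt P (P' x) x) ∧
      (∀ x, HasDerivAt P' ((P x - (d * (w x)^2 + d^2/2 * (w₁ x)^2))/d) x) ∧
      (∀ x, d/2 * (w x)^2 ≤ P x - Real.sqrt d * P' x) ∧
      (∀ x, d/2 * (w x)^2 ≤ P x + Real.sqrt d * P' x) := by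
  have hd0 : (0:ℝ) < d := by linarith
  set r := Real.sqrt d with hrdef
  have hr1 : (1:ℝ) ≤ r := by
    rw [show (1:ℝ) = Real.sqrt 1 by simp [Real.sqrt_one]]
    exact Real.sqrt_le_sqrt hd
  have hr0 : (0:ℝ) < r := by linarith
  have hrd : r^2 = d := Real.sq_sqrt hd0.le
  set f : ℝ → ℝ := fun ξ => d * (w ξ)^2 + d^2/2 * (w₁ ξ)^2 with hfdef
  have hwc : Continuous w := by
    have : Differentiable ℝ w := fun x => (hw x).differentiableAt
    exact this.continuous
  have hfc : Continuous f :=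
    ((continuous_const.mul (hwc.pow 2)).add (continuous_const.mul (hw₁c.pow 2)))
  have hfnn : ∀ ξ, 0 ≤ f ξ := by
    intro ξ
    have h1 := sq_nonneg (w ξ); have h2 := sq_nonneg (w₁ ξ)
    have : (0:ℝ) < d^2/2 := by positivity
    simp only [hfdef]; nlinarith
  have hfint : Integrable f := (hint.const_mul d).add (hint1.const_mul (d^2/2))
  set ep : ℝ → ℝ := fun ξ => Real.exp (ξ / r) with hepdef
  set em : ℝ → ℝ := fun ξ => Real.exp (-ξ / r) with hemdef
  have hepc : Continuous ep := Real.continuous_exp.comp (continuous_id.div_const r)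
  have hemc : Continuous em := Real.continuous_exp.comp (continuous_id.neg.div_const r)
  have hee : ∀ ξ : ℝ, em ξ * ep ξ = 1 := by
    intro ξ
    rw [hemdef, hepdef]
    rw [← Real.exp_add, show -ξ/r + ξ/r = 0 by ring, Real.exp_zero]
  have hIm : ∀ x : ℝ, IntegrableOn (fun ξ => ep ξ * f ξ) (Iic x) := by
    intro x
    refine Integrable.mono' ((hfint.const_mul (Real.exp (x/r))).integrableOn)
      ((hepc.mul hfc).aestronglyMeasurable.restrict) ?_
    filter_upwards [ae_restrict_mem measurableSet_Iic] with ξ hξ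
    rw [Real.norm_eq_abs, abs_of_nonneg (mul_nonneg (Real.exp_pos _).le (hfnn ξ))]
    have : Real.exp (ξ/r) ≤ Real.exp (x/r) := by
      apply Real.exp_le_exp.2; gcongr; exact hξ
    exact mul_le_mul_of_nonneg_right this (hfnn ξ)
  have hIp : ∀ x : ℝ, IntegrableOn (fun ξ => em ξ * f ξ) (Ioi x) := by
    intro x
    refine Integrable.mono' ((hfint.const_mul (Real.exp (-x/r))).integrableOn)
      ((hemc.mul hfc).aestronglyMeasurable.restrict) ?_
    filter_upwards [ae_restrict_mem measurableSet_Ioi] with ξ hξ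
    rw [Real.norm_eq_abs, abs_of_nonneg (mul_nonneg (Real.exp_pos _).le (hfnn ξ))]
    have : Real.exp (-ξ/r) ≤ Real.exp (-x/r) := by
      apply Real.exp_le_exp.2; gcongr
      exact le_of_lt hξ
    exact mul_le_mul_of_nonneg_right this (hfnn ξ)
  set Fm : ℝ → ℝ := fun x => ∫ ξ in Iic x, ep ξ * f ξ with hFmdef
  set Fp : ℝ → ℝ := fun x => ∫ ξ in Ioi x, em ξ * f ξ with hFpdef
  have hFm : ∀ x : ℝ, HasDerivAt Fm (ep x * f x) x := by
    intro x
    have h1 : ∀ y : ℝ, Fm y = Fm 0 + ∫ ξ in (0:ℝ)..y, ep ξ * f ξ := by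
      intro y
      rw [← intervalIntegral.integral_Iic_sub_Iic (hIm 0) (hIm y)]
      ring
    have hii : IntervalIntegrable (fun ξ => ep ξ * f ξ) volume 0 x :=
      ((hIm (max 0 x)).mono_set (fun z hz => le_trans hz.2 (le_refl _))).intervalIntegrable
    have h2 : HasDerivAt (fun y => Fm 0 + ∫ ξ in (0:ℝ)..y, ep ξ * f ξ) (ep x * f x) x :=
      ((intervalIntegral.integral_hasDerivAt_right hii
        ((hepc.mul hfc).stronglyMeasurableAtFilter _ _)
        (hepc.mul hfc).continuousAt).const_add (Fm 0))
    exact h2.congr_of_eventuallyEq (Filter.Eventually.of_forall h1)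
  have hFpsub : ∀ a b : ℝ, a ≤ b → Fp a - Fp b = ∫ ξ in a..b, em ξ * f ξ := by
    intro a b hab
    rw [intervalIntegral.integral_of_le hab]
    have hsplit : Ioi a = Ioc a b ∪ Ioi b := by
      rw [Set.Ioc_union_Ioi_eq_Ioi hab]
    have hd1 : Disjoint (Ioc a b) (Ioi b) := by
      rw [Set.disjoint_left]; intro z hz hz'; exact absurd hz.2 (not_le.2 hz')
    have : ∫ ξ in Ioi a, em ξ * f ξ
        = (∫ ξ in Ioc a b, em ξ * f ξ) + ∫ ξ in Ioi b, em ξ * f ξ := by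
      rw [← MeasureTheory.setIntegral_union hd1 measurableSet_Ioi
        ((hIp a).mono_set (fun z hz => hz.1)) (hIp b), ← hsplit]
    simp only [hFpdef] at this ⊢
    linarith [this]
  have hFp : ∀ x : ℝ, HasDerivAt Fp (-(em x * f x)) x := by
    intro x
    have h1 : ∀ y : ℝ, Fp y = Fp 0 - ∫ ξ in (0:ℝ)..y, em ξ * f ξ := by
      intro y
      rcases le_total 0 y with h | h
      · have := hFpsub 0 y h; linarith
      · have := hFpsub y 0 h
        rw [intervalIntegral.integral_symm y 0]
        linarith
    have hii : IntervalIntegrable (fun ξ => em ξ * f ξ) volume 0 x :=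
      ((hIp (0 ⊓ x - 1)).mono_set
        (fun z hz => Set.mem_Ioi.2 (by have := hz.1; linarith))).intervalIntegrable
    have h2 : HasDerivAt (fun y => Fp 0 - ∫ ξ in (0:ℝ)..y, em ξ * f ξ) (-(em x * f x)) x :=
      ((intervalIntegral.integral_hasDerivAt_right hii
        ((hemc.mul hfc).stronglyMeasurableAtFilter _ _)
        (hemc.mul hfc).continuousAt).const_sub (Fp 0))
    exact h2.congr_of_eventuallyEq (Filter.Eventually.of_forall h1)
  -- continue
  have hexp_p : ∀ x : ℝ, HasDerivAt ep (ep x * (1/r)) x := by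
    intro x
    simpa using (HasDerivAt.exp ((hasDerivAt_id x).div_const r))
  have hexp_m : ∀ x : ℝ, HasDerivAt em (em x * (-1/r)) x := by
    intro x
    simpa using (HasDerivAt.exp ((hasDerivAt_id x).neg.div_const r))
  set P : ℝ → ℝ := fun x => 1/(2*r) * (em x * Fm x + ep x * Fp x) with hPdef
  set Q : ℝ → ℝ := fun x => 1/(2*r^2) * (ep x * Fp x - em x * Fm x) with hQdef
  have hconv : ∀ x : ℝ, (∫ ξ : ℝ, pd d (x - ξ) * f ξ) = P x := by
    intro x
    have hcont : Continuous (fun ξ : ℝ => pd d (x - ξ) * f ξ) := by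
      apply Continuous.mul _ hfc
      unfold pd
      exact continuous_const.mul (Real.continuous_exp.comp
        (((continuous_const.sub continuous_id).abs.neg).div_const _))
    have hintg : ∀ s : Set ℝ, IntegrableOn (fun ξ => pd d (x - ξ) * f ξ) s := by
      intro s
      apply Integrable.integrableOn
      refine Integrable.mono' (hfint.const_mul (1/(2*r))) hcont.aestronglyMeasurable ?_
      refine Filter.Eventually.of_forall (fun ξ => ?_)
      have hpd0 : 0 ≤ pd d (x - ξ) := by
        unfold pd
        positivity
      rw [Real.norm_eq_abs, abs_of_nonneg (mul_nonneg hpd0 (hfnn ξ))]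
      have hpd1 : pd d (x - ξ) ≤ 1/(2*r) := by
        unfold pd
        rw [← hrdef]
        have h1 : Real.exp (-|x - ξ| / r) ≤ 1 := by
          rw [Real.exp_le_one_iff, neg_div]
          have h2 : 0 ≤ |x - ξ| / r := by positivity
          linarith
        have h3 : (0:ℝ) < 1/(2*r) := by positivity
        nlinarith [h1, h3, Real.exp_pos (-|x - ξ| / r)]
      exact mul_le_mul_of_nonneg_right hpd1 (hfnn ξ)
    rw [← intervalIntegral.integral_Iic_add_Ioi (hintg (Iic x)) (hintg (Ioi x))]
    have hL : (∫ ξ in Iic x, pd d (x - ξ) * f ξ) = 1/(2*r) * em x * Fm x := by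
      have h1 : ∀ ξ ∈ Iic x, pd d (x - ξ) * f ξ = (1/(2*r) * em x) * (ep ξ * f ξ) := by
        intro ξ hξ
        have hξx : ξ ≤ x := hξ
        have habs : |x - ξ| = x - ξ := abs_of_nonneg (by linarith)
        unfold pd
        rw [← hrdef, habs, hemdef, hepdef]
        simp only
        rw [show -(x - ξ)/r = -x/r + ξ/r by ring, Real.exp_add]
        ring
      rw [MeasureTheory.setIntegral_congr_fun measurableSet_Iic h1,
        MeasureTheory.integral_const_mul]
    have hR : (∫ ξ in Ioi x, pd d (x - ξ) * f ξ) = 1/(2*r) * ep x * Fp x := by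
      have h1 : ∀ ξ ∈ Ioi x, pd d (x - ξ) * f ξ = (1/(2*r) * ep x) * (em ξ * f ξ) := by
        intro ξ hξ
        have hξx : x < ξ := hξ
        have habs : |x - ξ| = ξ - x := by
          rw [abs_of_nonpos (by linarith)]; ring
        unfold pd
        rw [← hrdef, habs, hemdef, hepdef]
        simp only
        rw [show -(ξ - x)/r = x/r + -ξ/r by ring, Real.exp_add]
        ring
      rw [MeasureTheory.setIntegral_congr_fun measurableSet_Ioi h1,
        MeasureTheory.integral_const_mul]
    rw [hL, hR, hPdef]
    ring
  have hPderiv : ∀ x : ℝ, HasDerivAt P (Q x) x := by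
    intro x
    have h := (((hexp_m x).mul (hFm x)).add ((hexp_p x).mul (hFp x))).const_mul (1/(2*r))
    refine h.congr_deriv ?_
    simp only [hQdef]
    field_simp
    ring
  have hQderiv : ∀ x : ℝ, HasDerivAt Q ((P x - f x)/d) x := by
    intro x
    have h := (((hexp_p x).mul (hFp x)).sub ((hexp_m x).mul (hFm x))).const_mul (1/(2*r^2))
    refine h.congr_deriv ?_
    have h1 : em x * ep x = 1 := hee x
    rw [hPdef, ← hrd]
    simp only
    rw [show em x * (ep x * f x) = f x by rw [← mul_assoc, h1]; ring]
    rw [show ep x * -(em x * f x) = -(f x) by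
      rw [show ep x * -(em x * f x) = -((em x * ep x) * f x) by ring, h1]; ring]
    field_simp
    ring
  -- lower bounds
  have hf1 : ∀ ξ : ℝ, w ξ^2 ≤ f ξ := by
    intro ξ
    simp only [hfdef]
    nlinarith [sq_nonneg (w ξ), sq_nonneg (w₁ ξ), sq_nonneg d]
  have hf2 : ∀ ξ : ℝ, w₁ ξ^2 ≤ 2 * f ξ := by
    intro ξ
    simp only [hfdef]
    nlinarith [sq_nonneg (w ξ), sq_nonneg (w₁ ξ), sq_nonneg (d - 1), sq_nonneg (d * w₁ ξ)]
  have hepos : ∀ ξ : ℝ, 0 < ep ξ := fun ξ => Real.exp_pos _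
  have hmpos : ∀ ξ : ℝ, 0 < em ξ := fun ξ => Real.exp_pos _
  have hrne : r ≠ 0 := ne_of_gt hr0
  have r3pos : (0:ℝ) < r^3 := by positivity
  have hr23 : r^2 ≤ r^3 := by nlinarith
  -- minus-side bound
  have key_m : ∀ x : ℝ, d/2 * (w x)^2 ≤ 1/r * (em x * Fm x) := by
    intro x
    set g : ℝ → ℝ := fun ξ => r^3/2 * (ep ξ * (w ξ)^2) with hgdef
    set gd : ℝ → ℝ := fun ξ => ep ξ * (r^2/2 * (w ξ)^2 + r^3 * (w ξ * w₁ ξ)) with hgddef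
    have hg : ∀ ξ : ℝ, HasDerivAt g (gd ξ) ξ := by
      intro ξ
      have h := ((hexp_p ξ).mul ((hw ξ).pow 2)).const_mul (r^3/2)
      refine h.congr_deriv ?_
      simp only [hgddef, Pi.pow_apply]
      field_simp
      ring
    have haux : ∀ ξ : ℝ, |r^2/2 * (w ξ)^2 + r^3 * (w ξ * w₁ ξ)| ≤ 4 * r^3 * f ξ :=
      fun ξ => aux_abs1 r (f ξ) (w ξ) (w₁ ξ) r3pos hr23 (hf1 ξ) (hf2 ξ)
    have hgle : ∀ ξ : ℝ, gd ξ ≤ ep ξ * f ξ := by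
      intro ξ
      simp only [hgddef, hfdef]
      rw [← hrd]
      have := aux_gle1 r (ep ξ) (w ξ) (w₁ ξ) (hepos ξ).le
      linarith
    have hgdabs : ∀ ξ : ℝ, |gd ξ| ≤ ep ξ * (4 * r^3 * f ξ) := by
      intro ξ
      simp only [hgddef]
      rw [abs_mul, abs_of_pos (hepos ξ)]
      exact mul_le_mul_of_nonneg_left (haux ξ) (hepos ξ).le
    have hgdc : Continuous gd := by
      simp only [hgddef]
      exact hepc.mul ((continuous_const.mul (hwc.pow 2)).add
        (continuous_const.mul (hwc.mul hw₁c)))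
    have hgint : IntegrableOn gd (Iic x) := by
      refine Integrable.mono' (((hfint.const_mul (Real.exp (x/r) * (4 * r^3)))).integrableOn)
        hgdc.aestronglyMeasurable.restrict ?_
      filter_upwards [ae_restrict_mem measurableSet_Iic] with ξ hξ
      rw [Real.norm_eq_abs]
      refine le_trans (hgdabs ξ) ?_
      have h1 : ep ξ ≤ Real.exp (x/r) := by
        simp only [hepdef]
        apply Real.exp_le_exp.2; gcongr; exact hξ
      have h2 : (0:ℝ) ≤ 4 * r^3 * f ξ := by
        have := hfnn ξ; positivity
      calc ep ξ * (4 * r^3 * f ξ) ≤ Real.exp (x/r) * (4 * r^3 * f ξ) :=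
            mul_le_mul_of_nonneg_right h1 h2
        _ = Real.exp (x/r) * (4 * r^3) * f ξ := by ring
    have hgtends : Tendsto g atBot (nhds 0) := by
      have h1 : Tendsto ep atBot (nhds 0) := by
        simp only [hepdef]
        exact Real.tendsto_exp_atBot.comp (tendsto_id.atBot_div_const hr0)
      have h2 : Tendsto (fun ξ => (w ξ)^2) atBot (nhds 0) := by
        have h := hbot.mul hbot
        rw [mul_zero] at h
        exact Filter.Tendsto.congr (fun ξ => (pow_two (w ξ)).symm) h
      have h3 := (h1.mul h2).const_mul (r^3/2)
      simp only [mul_zero] at h3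
      exact h3
    have hfund := MeasureTheory.integral_Iic_of_hasDerivAt_of_tendsto
      (hg x).continuousAt.continuousWithinAt (fun ξ _ => hg ξ) hgint hgtends
    have hmono := MeasureTheory.setIntegral_mono_on hgint (hIm x) measurableSet_Iic
      (fun ξ _ => hgle ξ)
    have hFmge : g x ≤ Fm x := by
      rw [hfund] at hmono
      simp only [hFmdef]
      linarith
    have hgx : 1/r * (em x * g x) = d/2 * (w x)^2 := by
      simp only [hgdef]
      rw [show em x * (r^3/2 * (ep x * (w x)^2)) = r^3/2 * (em x * ep x * (w x)^2) by ring,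
        hee x, ← hrd]
      field_simp
    calc d/2 * (w x)^2 = 1/r * (em x * g x) := hgx.symm
      _ ≤ 1/r * (em x * Fm x) := by
          apply mul_le_mul_of_nonneg_left _ (by positivity)
          exact mul_le_mul_of_nonneg_left hFmge (hmpos x).le
  -- plus-side bound
  have key_p : ∀ x : ℝ, d/2 * (w x)^2 ≤ 1/r * (ep x * Fp x) := by
    intro x
    set g : ℝ → ℝ := fun ξ => r^3/2 * (em ξ * (w ξ)^2) with hgdef
    set gd : ℝ → ℝ := fun ξ => em ξ * (-(r^2/2) * (w ξ)^2 + r^3 * (w ξ * w₁ ξ)) with hgddef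
    have hg : ∀ ξ : ℝ, HasDerivAt g (gd ξ) ξ := by
      intro ξ
      have h := ((hexp_m ξ).mul ((hw ξ).pow 2)).const_mul (r^3/2)
      refine h.congr_deriv ?_
      simp only [hgddef, Pi.pow_apply]
      field_simp
      ring
    have haux : ∀ ξ : ℝ, |(-(r^2/2)) * (w ξ)^2 + r^3 * (w ξ * w₁ ξ)| ≤ 4 * r^3 * f ξ :=
      fun ξ => aux_abs2 r (f ξ) (w ξ) (w₁ ξ) r3pos hr23 (hf1 ξ) (hf2 ξ)
    have hgle : ∀ ξ : ℝ, -(em ξ * f ξ) ≤ gd ξ := by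
      intro ξ
      simp only [hgddef, hfdef]
      rw [← hrd]
      have := aux_gle2 r (em ξ) (w ξ) (w₁ ξ) (hmpos ξ).le
      linarith
    have hgdabs : ∀ ξ : ℝ, |gd ξ| ≤ em ξ * (4 * r^3 * f ξ) := by
      intro ξ
      simp only [hgddef]
      rw [abs_mul, abs_of_pos (hmpos ξ)]
      refine mul_le_mul_of_nonneg_left ?_ (hmpos ξ).le
      exact haux ξ
    have hgdc : Continuous gd := by
      simp only [hgddef]
      exact hemc.mul ((continuous_const.mul (hwc.pow 2)).add
        (continuous_const.mul (hwc.mul hw₁c)))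
    have hgint : IntegrableOn gd (Ioi x) := by
      refine Integrable.mono' (((hfint.const_mul (Real.exp (-x/r) * (4 * r^3)))).integrableOn)
        hgdc.aestronglyMeasurable.restrict ?_
      filter_upwards [ae_restrict_mem measurableSet_Ioi] with ξ hξ
      rw [Real.norm_eq_abs]
      refine le_trans (hgdabs ξ) ?_
      have h1 : em ξ ≤ Real.exp (-x/r) := by
        simp only [hemdef]
        apply Real.exp_le_exp.2; gcongr
        exact le_of_lt hξ
      have h2 : (0:ℝ) ≤ 4 * r^3 * f ξ := by
        have := hfnn ξ; positivity
      calc em ξ * (4 * r^3 * f ξ) ≤ Real.exp (-x/r) * (4 * r^3 * f ξ) :=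
            mul_le_mul_of_nonneg_right h1 h2
        _ = Real.exp (-x/r) * (4 * r^3) * f ξ := by ring
    have hgtends : Tendsto g atTop (nhds 0) := by
      have h1 : Tendsto em atTop (nhds 0) := by
        simp only [hemdef]
        have h0 : Tendsto (fun ξ : ℝ => -ξ/r) atTop atBot :=
          Filter.Tendsto.atBot_div_const hr0 tendsto_neg_atTop_atBot
        exact Real.tendsto_exp_atBot.comp h0
      have h2 : Tendsto (fun ξ => (w ξ)^2) atTop (nhds 0) := by
        have h := htop.mul htop
        rw [mul_zero] at h
        exact Filter.Tendsto.congr (fun ξ => (pow_two (w ξ)).symm) h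
      have h3 := (h1.mul h2).const_mul (r^3/2)
      simp only [mul_zero] at h3
      exact h3
    have hfund := MeasureTheory.integral_Ioi_of_hasDerivAt_of_tendsto
      (hg x).continuousAt.continuousWithinAt (fun ξ _ => hg ξ) hgint hgtends
    have hmono := MeasureTheory.setIntegral_mono_on ((hIp x).neg) hgint measurableSet_Ioi
      (fun ξ _ => by simpa using hgle ξ)
    simp only [Pi.neg_apply] at hmono
    rw [MeasureTheory.integral_neg, hfund] at hmono
    have hFpge : g x ≤ Fp x := by
      simp only [hFpdef]
      linarith
    have hgx : 1/r * (ep x * g x) = d/2 * (w x)^2 := by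
      simp only [hgdef]
      rw [show ep x * (r^3/2 * (em x * (w x)^2)) = r^3/2 * (em x * ep x * (w x)^2) by ring,
        hee x, ← hrd]
      field_simp
    calc d/2 * (w x)^2 = 1/r * (ep x * g x) := hgx.symm
      _ ≤ 1/r * (ep x * Fp x) := by
          apply mul_le_mul_of_nonneg_left _ (by positivity)
          exact mul_le_mul_of_nonneg_left hFpge (hepos x).le
  refine ⟨P, Q, hconv, hPderiv, ?_, ?_, ?_⟩
  · intro x
    have h := hQderiv x
    convert h using 2
  · intro x
    have h1 := key_m x
    have h2 : P x - r * Q x = 1/r * (em x * Fm x) := by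
      rw [hPdef, hQdef]
      simp only
      field_simp
      ring
    rw [h2]
    exact h1
  · intro x
    have h1 := key_p x
    have h2 : P x + r * Q x = 1/r * (ep x * Fp x) := by
      rw [hPdef, hQdef]
      simp only
      field_simp
      ring
    rw [h2]
    exact h1

lemma chain_rule_char {f ft : ℝ → ℝ → ℝ} {q : ℝ → ℝ} {m : ℝ} {t : ℝ} (ht : 0 ≤ t)
    (hdt : ∀ s : ℝ, 0 ≤ s → ∀ x : ℝ, HasDerivAt (fun s' => f s' x) (ft s x) s)
    (hcont : ContinuousOn (fun p : ℝ × ℝ => ft p.1 p.2) (Set.Ici 0 ×ˢ Set.univ))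
    (hqc : ContinuousAt q t)
    (hx : HasDerivAt (fun y => f t (q y)) m t) :
    HasDerivWithinAt (fun s => f s (q s)) (ft t (q t) + m) (Set.Ici 0) t := by
  rw [hasDerivWithinAt_iff_tendsto_slope]
  have hB : Tendsto (slope (fun y => f t (q y)) t) (nhdsWithin t (Ici 0 \ {t})) (nhds m) := by
    have h1 := hasDerivAt_iff_tendsto_slope.1 hx
    exact h1.mono_left (nhdsWithin_mono t (fun s hs => hs.2))
  have hA : Tendsto (fun s => (f s (q s) - f t (q s))/(s - t))
      (nhdsWithin t (Ici 0 \ {t})) (nhds (ft t (q t))) := by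
    rw [Metric.tendsto_nhdsWithin_nhds]
    intro ε hε
    have hc := hcont (t, q t) ⟨ht, mem_univ _⟩
    rw [Metric.continuousWithinAt_iff] at hc
    obtain ⟨δ₁, hδ₁pos, hδ₁⟩ := hc ε hε
    rw [Metric.continuousAt_iff] at hqc
    obtain ⟨δ₂, hδ₂pos, hδ₂⟩ := hqc δ₁ hδ₁pos
    refine ⟨min δ₁ δ₂, lt_min hδ₁pos hδ₂pos, ?_⟩
    intro s hs hdist
    have hs0 : (0:ℝ) ≤ s := hs.1
    have hsne : s ≠ t := hs.2
    have hdist1 : dist s t < δ₁ := lt_of_lt_of_le hdist (min_le_left _ _)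
    have hdist2 : dist s t < δ₂ := lt_of_lt_of_le hdist (min_le_right _ _)
    have hqdist : dist (q s) (q t) < δ₁ := hδ₂ hdist2
    -- MVT
    rcases lt_or_gt_of_ne hsne with hlt | hgt
    · -- s < t
      obtain ⟨c, hcmem, hceq⟩ := exists_hasDerivAt_eq_slope (fun s' => f s' (q s))
        (fun s' => ft s' (q s)) hlt
        (fun s' hs' => ((hdt s' (le_trans hs0 hs'.1) (q s)).continuousAt).continuousWithinAt)
        (fun s' hs' => hdt s' (le_trans hs0 hs'.1.le) (q s))
      have hval : (f s (q s) - f t (q s))/(s - t) = ft c (q s) := by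
        rw [hceq]
        have h1 : s - t ≠ 0 := sub_ne_zero.2 hsne
        have h2 : t - s ≠ 0 := sub_ne_zero.2 (Ne.symm hsne)
        field_simp
        ring
      rw [hval]
      have hc0 : (0:ℝ) ≤ c := le_trans hs0 hcmem.1.le
      have hcd : dist c t < δ₁ := by
        rw [Real.dist_eq]
        rw [Real.dist_eq] at hdist1
        rw [abs_lt] at hdist1 ⊢
        constructor <;> [linarith [hcmem.1]; linarith [hcmem.2]]
      exact hδ₁ (x := (c, q s)) ⟨hc0, mem_univ _⟩
        (by rw [Prod.dist_eq]; exact max_lt hcd hqdist)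
    · -- t < s
      obtain ⟨c, hcmem, hceq⟩ := exists_hasDerivAt_eq_slope (fun s' => f s' (q s))
        (fun s' => ft s' (q s)) hgt
        (fun s' hs' => ((hdt s' (le_trans ht hs'.1) (q s)).continuousAt).continuousWithinAt)
        (fun s' hs' => hdt s' (le_trans ht hs'.1.le) (q s))
      have hval : (f s (q s) - f t (q s))/(s - t) = ft c (q s) := by
        rw [hceq]
      rw [hval]
      have hc0 : (0:ℝ) ≤ c := le_trans ht hcmem.1.le
      have hcd : dist c t < δ₁ := by
        rw [Real.dist_eq]
        rw [Real.dist_eq] at hdist1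
        rw [abs_lt] at hdist1 ⊢
        constructor <;> [linarith [hcmem.1]; linarith [hcmem.2]]
      exact hδ₁ (x := (c, q s)) ⟨hc0, mem_univ _⟩
        (by rw [Prod.dist_eq]; exact max_lt hcd hqdist)
  have hev : ∀ᶠ s in nhdsWithin t (Ici 0 \ {t}),
      (fun s => (f s (q s) - f t (q s))/(s - t) + slope (fun y => f t (q y)) t s) s
        = slope (fun s => f s (q s)) t s := by
    filter_upwards [self_mem_nhdsWithin] with s hs
    have hst : s - t ≠ 0 := sub_ne_zero.2 hs.2
    simp only [slope_def_field]
    field_simp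
    ring
  exact Tendsto.congr' hev (hA.add hB)

lemma ode_blowup (κ : ℝ) (hκ : 0 < κ) (α β A B : ℝ → ℝ)
    (hα : ∀ t : ℝ, 0 ≤ t → HasDerivWithinAt α (A t) (Ici 0) t)
    (hβ : ∀ t : ℝ, 0 ≤ t → HasDerivWithinAt β (B t) (Ici 0) t)
    (hA : ∀ t : ℝ, 0 ≤ t → A t ≤ κ * (α t * β t))
    (hB : ∀ t : ℝ, 0 ≤ t → -(κ * (α t * β t)) ≤ B t)
    (hα0 : α 0 < 0) (hβ0 : 0 < β 0) : False := by
  set h : ℝ → ℝ := fun t => -(α t * β t) with hdef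
  set D : ℝ → ℝ := fun t => -(A t * β t + α t * B t) with hDdef
  have hh : ∀ t : ℝ, 0 ≤ t → HasDerivWithinAt h (D t) (Ici 0) t := by
    intro t ht
    exact ((hα t ht).mul (hβ t ht)).neg
  have hαc : ContinuousOn α (Ici 0) := fun t ht => (hα t ht).continuousWithinAt
  have hβc : ContinuousOn β (Ici 0) := fun t ht => (hβ t ht).continuousWithinAt
  have hhc : ContinuousOn h (Ici 0) := fun t ht => (hh t ht).continuousWithinAt
  have hDge : ∀ s : ℝ, 0 ≤ s → α s < 0 → 0 < β s →
      κ * (-(α s * β s)) * (β s - α s) ≤ D s := by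
    intro s hs ha hb
    have e1 : A s * β s ≤ κ * (α s * β s) * β s :=
      mul_le_mul_of_nonneg_right (hA s hs) hb.le
    have e2 : α s * B s ≤ α s * (-(κ * (α s * β s))) :=
      mul_le_mul_of_nonpos_left (hB s hs) ha.le
    simp only [hDdef]
    nlinarith [e1, e2]
  have hmono : ∀ T : ℝ, 0 ≤ T → (∀ s, 0 < s → s < T → (α s < 0 ∧ 0 < β s)) →
      h 0 ≤ h T := by
    intro T hT hgood
    have hmo := monotoneOn_of_deriv_nonneg (convex_Icc (0:ℝ) T)
      (hhc.mono (Icc_subset_Ici_self)) ?_ ?_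
    · exact hmo ⟨le_refl 0, hT⟩ ⟨hT, le_refl T⟩ hT
    · rw [interior_Icc]
      intro s hs
      exact (((hh s hs.1.le).hasDerivAt (Ici_mem_nhds hs.1)).differentiableAt).differentiableWithinAt
    · rw [interior_Icc]
      intro s hs
      have hd := (hh s hs.1.le).hasDerivAt (Ici_mem_nhds hs.1)
      rw [hd.deriv]
      obtain ⟨ha, hb⟩ := hgood s hs.1 hs.2
      have e3 : 0 ≤ κ * (-(α s * β s)) * (β s - α s) :=
        mul_nonneg (mul_nonneg hκ.le (by nlinarith)) (by linarith)
      linarith [hDge s hs.1.le ha hb]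
  have h0pos : 0 < h 0 := by simp only [hdef]; nlinarith
  have hgood : ∀ t : ℝ, 0 ≤ t → α t < 0 ∧ 0 < β t := by
    by_contra hbad
    push_neg at hbad
    obtain ⟨t₀, ht₀, hbad₀⟩ := hbad
    set S : Set ℝ := {t : ℝ | 0 ≤ t ∧ ¬(α t < 0 ∧ 0 < β t)} with hSdef
    have hne : S.Nonempty := ⟨t₀, ht₀, fun hc => absurd (hbad₀ hc.1) (not_le.2 hc.2)⟩
    have hbdd : BddBelow S := ⟨0, fun s hs => hs.1⟩
    set t₁ := sInf S with ht₁def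
    have ht₁0 : 0 ≤ t₁ := le_csInf hne (fun s hs => hs.1)
    have hgood_lt : ∀ s, 0 ≤ s → s < t₁ → α s < 0 ∧ 0 < β s := by
      intro s hs hlt
      by_contra hc
      exact absurd (csInf_le hbdd ⟨hs, hc⟩) (not_le.2 hlt)
    have hm : h 0 ≤ h t₁ := hmono t₁ ht₁0 (fun s hs hlt => hgood_lt s hs.le hlt)
    have hprod : α t₁ * β t₁ < 0 := by
      have : 0 < h t₁ := lt_of_lt_of_le h0pos hm
      simp only [hdef] at this
      linarith
    -- exclude α t₁ > 0 case
    have ht₁good : α t₁ < 0 ∧ 0 < β t₁ := by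
      rcases lt_or_gt_of_ne (fun hz : α t₁ = 0 => by rw [hz] at hprod; simp at hprod) with hlt | hgt
      · exact ⟨hlt, by nlinarith⟩
      · -- α t₁ > 0 : contradiction
        exfalso
        rcases eq_or_lt_of_le ht₁0 with heq | hpos'
        · rw [← heq] at hgt; linarith
        · -- t₁ > 0 : use continuity of α within Ici 0
          have hc := hαc t₁ ht₁0
          rw [Metric.continuousWithinAt_iff] at hc
          obtain ⟨δ, hδpos, hδ⟩ := hc (α t₁) hgt
          set s := max 0 (t₁ - δ/2) with hsdef
          have hs0 : 0 ≤ s := le_max_left _ _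
          have hslt : s < t₁ := by
            rw [hsdef, max_lt_iff]
            exact ⟨hpos', by linarith⟩
          have hsd : dist s t₁ < δ := by
            rw [Real.dist_eq, abs_lt]
            constructor
            · have : t₁ - δ/2 ≤ s := le_max_right _ _
              linarith
            · linarith
          have := hδ (Set.mem_Ici.2 hs0) hsd
          rw [Real.dist_eq, abs_lt] at this
          have hαs := (hgood_lt s hs0 hslt).1
          linarith [this.1]
    -- now find contradiction with the infimum
    obtain ⟨hat, hbt⟩ := ht₁good
    have hcα := hαc t₁ ht₁0
    rw [Metric.continuousWithinAt_iff] at hcα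
    obtain ⟨δ₁, hδ₁pos, hδ₁⟩ := hcα (-(α t₁)) (by linarith)
    have hcβ := hβc t₁ ht₁0
    rw [Metric.continuousWithinAt_iff] at hcβ
    obtain ⟨δ₂, hδ₂pos, hδ₂⟩ := hcβ (β t₁) hbt
    set δ := min δ₁ δ₂ with hδdef
    have hδpos : 0 < δ := lt_min hδ₁pos hδ₂pos
    obtain ⟨b, hbS, hblt⟩ := (csInf_lt_iff hbdd hne).1 (show sInf S < t₁ + δ by
      rw [← ht₁def]; linarith)
    have hb0 : 0 ≤ b := hbS.1
    have hbgood : α b < 0 ∧ 0 < β b := by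
      rcases lt_or_ge b t₁ with hl | hg
      · exact hgood_lt b hb0 hl
      · have hbd : dist b t₁ < δ := by
          rw [Real.dist_eq, abs_lt]
          constructor <;> [linarith; linarith]
        constructor
        · have := hδ₁ (Set.mem_Ici.2 hb0) (lt_of_lt_of_le hbd (min_le_left _ _))
          rw [Real.dist_eq, abs_lt] at this
          linarith [this.2]
        · have := hδ₂ (Set.mem_Ici.2 hb0) (lt_of_lt_of_le hbd (min_le_right _ _))
          rw [Real.dist_eq, abs_lt] at this
          linarith [this.1]
    exact hbS.2 hbgood
  -- global positivity and monotonicity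
  have hpos : ∀ t : ℝ, 0 ≤ t → 0 < h t := by
    intro t ht
    obtain ⟨ha, hb⟩ := hgood t ht
    simp only [hdef]; nlinarith
  have hsqle : ∀ s : ℝ, 0 ≤ s → Real.sqrt (h s) ≤ (β s - α s)/2 := by
    intro s hs
    obtain ⟨ha, hb⟩ := hgood s hs
    have h1 : h s ≤ ((β s - α s)/2)^2 := by
      simp only [hdef]; nlinarith [sq_nonneg (β s + α s)]
    have h2 := Real.sqrt_le_sqrt h1
    rwa [Real.sqrt_sq (by linarith)] at h2
  set G : ℝ → ℝ := fun t => (Real.sqrt (h t))⁻¹ with hGdef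
  set φ : ℝ → ℝ := fun t => G t + κ * t with hφdef
  set T : ℝ := G 0 / κ + 1 with hTdef
  have hG0 : 0 ≤ G 0 := by
    rw [hGdef]
    simp only
    positivity
  have hT0 : 0 ≤ T := by
    rw [hTdef]
    positivity
  have hGpos : ∀ t : ℝ, 0 ≤ t → 0 < G t := by
    intro t ht
    rw [hGdef]
    simp only
    exact inv_pos.2 (Real.sqrt_pos.2 (hpos t ht))
  have hanti := antitoneOn_of_deriv_nonpos (convex_Icc (0:ℝ) T) (f := φ) ?_ ?_ ?_
  · have := hanti ⟨le_refl 0, hT0⟩ ⟨hT0, le_refl T⟩ hT0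
    -- φ T ≤ φ 0
    have hφ0 : φ 0 = G 0 := by rw [hφdef]; simp
    have hφT : φ T = G T + κ * T := rfl
    have hGT := hGpos T hT0
    have hκT : κ * T = G 0 + κ := by
      rw [hTdef]
      field_simp
    rw [hφ0, hφT, hκT] at this
    linarith
  · -- continuity of φ on Icc 0 T
    apply ContinuousOn.add
    · apply ContinuousOn.inv₀
      · exact (hhc.mono Icc_subset_Ici_self).sqrt
      · intro s hs
        exact ne_of_gt (Real.sqrt_pos.2 (hpos s hs.1))
    · exact (continuous_const.mul continuous_id).continuousOn
  · rw [interior_Icc]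
    intro s hs
    have hd := (hh s hs.1.le).hasDerivAt (Ici_mem_nhds hs.1)
    have hne : h s ≠ 0 := ne_of_gt (hpos s hs.1.le)
    have hsne : Real.sqrt (h s) ≠ 0 := ne_of_gt (Real.sqrt_pos.2 (hpos s hs.1.le))
    exact (((hd.sqrt hne).inv hsne).add ((hasDerivAt_id s).const_mul κ)).differentiableAt.differentiableWithinAt
  · rw [interior_Icc]
    intro s hs
    have hs0 : (0:ℝ) ≤ s := hs.1.le
    have hd := (hh s hs0).hasDerivAt (Ici_mem_nhds hs.1)
    have hpos' := hpos s hs0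
    have hne : h s ≠ 0 := ne_of_gt hpos'
    have hsqpos : 0 < Real.sqrt (h s) := Real.sqrt_pos.2 hpos'
    have hsne : Real.sqrt (h s) ≠ 0 := ne_of_gt hsqpos
    have hφd : HasDerivAt φ (-(D s / (2 * Real.sqrt (h s))) / (Real.sqrt (h s))^2 + κ * 1) s :=
      ((hd.sqrt hne).inv hsne).add ((hasDerivAt_id s).const_mul κ)
    rw [hφd.deriv]
    -- goal: -(D s / (2 * √(h s))) / (√(h s))^2 + κ * 1 ≤ 0
    obtain ⟨ha, hb⟩ := hgood s hs0
    have hDb : 2 * κ * h s * Real.sqrt (h s) ≤ D s := by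
      have e4 : κ * h s * (2 * Real.sqrt (h s)) ≤ κ * h s * (β s - α s) := by
        apply mul_le_mul_of_nonneg_left _ (mul_nonneg hκ.le hpos'.le)
        linarith [hsqle s hs0]
      have e5 := hDge s hs0 ha hb
      have e6 : κ * (-(α s * β s)) * (β s - α s) = κ * h s * (β s - α s) := by
        rw [hdef]
      nlinarith [e4, e5, e6]
    have hsq2 : (Real.sqrt (h s))^2 = h s := Real.sq_sqrt hpos'.le
    rw [hsq2]
    have key : κ * (2 * Real.sqrt (h s) * h s) ≤ D s := by nlinarith [hDb]
    have h2s : 0 < 2 * Real.sqrt (h s) := by linarith [Real.sqrt_pos.2 hpos']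
    have hge : D s / (2 * Real.sqrt (h s)) / h s ≥ κ := by
      rw [div_div, ge_iff_le, le_div_iff₀ (by positivity)]
      nlinarith [key]
    rw [neg_div]
    linarith

set_option maxHeartbeats 1600000 in
/-- **Blow-up theorem (Theorem 1.3) for classical solutions.** For `d ≥ 1` there is no
global classical solution `v` of the reduced equation
`∂ₜv + d v ∂ₓv = -∂ₓ (p_d ∗ (d v² + (d²/2)(∂ₓv)²))` on `[0,∞) × ℝ` with
nonincreasing energy, decay at spatial infinity, and a global characteristic through
`x₀`, whenever the initial slope satisfies `∂ₓv(0,x₀) < -(1/√d)|v(0,x₀)|`. -/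
theorem blow_up (d : ℝ) (hd : 1 ≤ d) (x₀ : ℝ) :
    ¬ ∃ (v : ℝ → ℝ → ℝ) (q : ℝ → ℝ),
      -- (a) regularity: v, ∂ₓv, ∂ₓ²v, ∂ₜv, ∂ₜ∂ₓv exist and are continuous on [0,∞) × ℝ
      (∀ t : ℝ, 0 ≤ t → ∀ x : ℝ, DifferentiableAt ℝ (fun s => v s x) t) ∧
      (∀ t : ℝ, 0 ≤ t → ∀ x : ℝ, DifferentiableAt ℝ (v t) x) ∧
      (∀ t : ℝ, 0 ≤ t → ∀ x : ℝ, DifferentiableAt ℝ (deriv (v t)) x) ∧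
      (∀ t : ℝ, 0 ≤ t → ∀ x : ℝ, DifferentiableAt ℝ (fun s => deriv (v s) x) t) ∧
      ContinuousOn (fun p : ℝ × ℝ => v p.1 p.2) (Set.Ici 0 ×ˢ Set.univ) ∧
      ContinuousOn (fun p : ℝ × ℝ => deriv (v p.1) p.2) (Set.Ici 0 ×ˢ Set.univ) ∧
      ContinuousOn (fun p : ℝ × ℝ => deriv (deriv (v p.1)) p.2)
        (Set.Ici 0 ×ˢ Set.univ) ∧
      ContinuousOn (fun p : ℝ × ℝ => deriv (fun s => v s p.2) p.1)
        (Set.Ici 0 ×ˢ Set.univ) ∧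
      ContinuousOn (fun p : ℝ × ℝ => deriv (fun s => deriv (v s) p.2) p.1)
        (Set.Ici 0 ×ˢ Set.univ) ∧
      -- mixed partials commute: ∂ₜ∂ₓv = ∂ₓ∂ₜv
      (∀ t : ℝ, 0 ≤ t → ∀ x : ℝ, deriv (fun s => deriv (v s) x) t
        = deriv (fun y => deriv (fun s => v s y) t) x) ∧
      -- (b) square-integrability, spatial decay, and nonincreasing energy
      (∀ t : ℝ, 0 ≤ t → MeasureTheory.Integrable (fun ξ => (v t ξ) ^ 2)) ∧
      (∀ t : ℝ, 0 ≤ t → MeasureTheory.Integrable (fun ξ => (deriv (v t) ξ) ^ 2)) ∧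
      (∀ t : ℝ, 0 ≤ t → Filter.Tendsto (v t) Filter.atTop (nhds 0)) ∧
      (∀ t : ℝ, 0 ≤ t → Filter.Tendsto (v t) Filter.atBot (nhds 0)) ∧
      (∀ t : ℝ, 0 ≤ t →
        (∫ ξ : ℝ, ((v t ξ) ^ 2 + d * (deriv (v t) ξ) ^ 2))
          ≤ ∫ ξ : ℝ, ((v 0 ξ) ^ 2 + d * (deriv (v 0) ξ) ^ 2)) ∧
      -- (c) the reduced equation with P = p_d ∗ (d v² + (d²/2)(∂ₓv)²)
      (∀ t : ℝ, 0 ≤ t → ∀ x : ℝ,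
        deriv (fun s => v s x) t + d * v t x * deriv (v t) x
          = -deriv (fun y => ∫ ξ : ℝ,
              pd d (y - ξ) * (d * (v t ξ) ^ 2 + d ^ 2 / 2 * (deriv (v t) ξ) ^ 2)) x) ∧
      -- (d) a global characteristic through x₀
      q 0 = x₀ ∧
      (∀ t : ℝ, 0 ≤ t → HasDerivAt q (d * v t (q t)) t) ∧
      -- (e) the initial slope condition
      deriv (v 0) x₀ < -(1 / Real.sqrt d) * |v 0 x₀| := by
  rintro ⟨v, q, hvt, hvx, hvxx, hvtx, hcv, hcvx, hcvxx, hcvt, hcvtx, hmix, hL2, hL2x,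
    htop, hbot, _henergy, heq, hq0, hq', hslope⟩
  have hd0 : (0:ℝ) < d := by linarith
  set r := Real.sqrt d with hrdef
  have hr1 : (1:ℝ) ≤ r := by
    rw [hrdef, show (1:ℝ) = Real.sqrt 1 by simp [Real.sqrt_one]]
    exact Real.sqrt_le_sqrt hd
  have hr0 : (0:ℝ) < r := by linarith
  have hrd : r^2 = d := Real.sq_sqrt hd0.le
  set α : ℝ → ℝ := fun s => v s (q s) + r * deriv (v s) (q s) with hαdef
  set β : ℝ → ℝ := fun s => v s (q s) - r * deriv (v s) (q s) with hβdef
  have hkey : ∀ t : ℝ, 0 ≤ t → ∃ a b : ℝ,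
      HasDerivWithinAt α a (Ici 0) t ∧
      HasDerivWithinAt β b (Ici 0) t ∧
      a ≤ (r/2) * (α t * β t) ∧
      -((r/2) * (α t * β t)) ≤ b := by
    intro t ht
    have hw1c : Continuous (deriv (v t)) := by
      rw [continuous_iff_continuousAt]
      exact fun x => (hvxx t ht x).continuousAt
    obtain ⟨P, Q, hconv, hP, hQ, hbm, hbp⟩ := kernel_main d hd (v t) (deriv (v t))
      (fun x => (hvx t ht x).hasDerivAt) hw1c (hL2 t ht) (hL2x t ht) (htop t ht) (hbot t ht)
    have hPfun : (fun y => ∫ ξ : ℝ,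
        pd d (y - ξ) * (d * (v t ξ) ^ 2 + d ^ 2 / 2 * (deriv (v t) ξ) ^ 2)) = P :=
      funext hconv
    have ht_eq : ∀ x : ℝ, deriv (fun s => v s x) t
        = -(Q x) - d * v t x * deriv (v t) x := by
      intro x
      have h := heq t ht x
      rw [hPfun, (hP x).deriv] at h
      linarith
    have hqc : ContinuousAt q t := (hq' t ht).continuousAt
    have hu : HasDerivWithinAt (fun s => v s (q s))
        (deriv (fun s => v s (q t)) t + deriv (v t) (q t) * (d * v t (q t)))
        (Ici 0) t := by
      refine chain_rule_char (f := fun s x => v s x)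
        (ft := fun s x => deriv (fun s' => v s' x) s) ht
        (fun s hs x => (hvt s hs x).hasDerivAt) hcvt hqc ?_
      exact HasDerivAt.comp t (hvx t ht (q t)).hasDerivAt (hq' t ht)
    have hy : HasDerivWithinAt (fun s => deriv (v s) (q s))
        (deriv (fun s => deriv (v s) (q t)) t
          + deriv (deriv (v t)) (q t) * (d * v t (q t)))
        (Ici 0) t := by
      refine chain_rule_char (f := fun s x => deriv (v s) x)
        (ft := fun s x => deriv (fun s' => deriv (v s') x) s) ht
        (fun s hs x => (hvtx s hs x).hasDerivAt) hcvtx hqc ?_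
      exact HasDerivAt.comp t (hvxx t ht (q t)).hasDerivAt (hq' t ht)
    -- mixed partial computation
    have htx_eq : deriv (fun s => deriv (v s) (q t)) t
        = -((P (q t) - (d * (v t (q t))^2 + d^2/2 * (deriv (v t) (q t))^2))/d)
          - ((d * deriv (v t) (q t)) * deriv (v t) (q t)
            + (d * v t (q t)) * deriv (deriv (v t)) (q t)) := by
      rw [hmix t ht (q t)]
      have hfun2 : (fun y => deriv (fun s => v s y) t)
          = (fun y => -(Q y) - d * v t y * deriv (v t) y) := funext ht_eq
      rw [hfun2]
      have hprod : HasDerivAt (fun y => d * v t y * deriv (v t) y)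
          ((d * deriv (v t) (q t)) * deriv (v t) (q t)
            + (d * v t (q t)) * deriv (deriv (v t)) (q t)) (q t) := by
        exact ((hvx t ht (q t)).hasDerivAt.const_mul d).mul (hvxx t ht (q t)).hasDerivAt
      exact (((hQ (q t)).neg).sub hprod).deriv
    rw [ht_eq (q t)] at hu
    rw [htx_eq] at hy
    have hu' : HasDerivWithinAt (fun s => v s (q s)) (-(Q (q t))) (Ici 0) t := by
      convert hu using 1
      ring
    have hy' : HasDerivWithinAt (fun s => deriv (v s) (q s))
        ((v t (q t))^2 - d/2 * (deriv (v t) (q t))^2 - 1/d * P (q t)) (Ici 0) t := by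
      convert hy using 1
      field_simp
      ring
    refine ⟨-(Q (q t)) + r * ((v t (q t))^2 - d/2 * (deriv (v t) (q t))^2 - 1/d * P (q t)),
      -(Q (q t)) - r * ((v t (q t))^2 - d/2 * (deriv (v t) (q t))^2 - 1/d * P (q t)),
      hu'.add (hy'.const_mul r), hu'.sub (hy'.const_mul r), ?_, ?_⟩
    · -- a-bound, uses hbp
      set uu := v t (q t)
      set yy := deriv (v t) (q t)
      have hαt : α t = uu + r * yy := rfl
      have hβt : β t = uu - r * yy := rfl
      rw [hαt, hβt]
      rw [← mul_le_mul_iff_right₀ hd0]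
      have hbp' : d/2 * uu^2 ≤ P (q t) + r * Q (q t) := by
        have h := hbp (q t); rw [← hrdef] at h; exact h
      have hscaled := mul_le_mul_of_nonneg_left hbp' hr0.le
      have hPz2 : d * (r * (1/d * P (q t))) = r * P (q t) := by field_simp
      have hd3 : d^2*r = d*r^3 := by rw [← hrd]; ring
      have hd4 : r^2 * Q (q t) = d * Q (q t) := by rw [hrd]
      nlinarith [hscaled, hPz2, hd3, hd4]
    · -- b-bound, uses hbm
      set uu := v t (q t)
      set yy := deriv (v t) (q t)
      have hαt : α t = uu + r * yy := rfl
      have hβt : β t = uu - r * yy := rfl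
      rw [hαt, hβt]
      rw [← mul_le_mul_iff_right₀ hd0]
      have hbm' : d/2 * uu^2 ≤ P (q t) - r * Q (q t) := by
        have h := hbm (q t); rw [← hrdef] at h; exact h
      have hscaled := mul_le_mul_of_nonneg_left hbm' hr0.le
      have hPz2 : d * (r * (1/d * P (q t))) = r * P (q t) := by field_simp
      have hd3 : d^2*r = d*r^3 := by rw [← hrd]; ring
      have hd4 : r^2 * Q (q t) = d * Q (q t) := by rw [hrd]
      nlinarith [hscaled, hPz2, hd3, hd4]
  choose! A B h1 h2 h3 h4 using hkey
  have hκ : (0:ℝ) < r/2 := by linarith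
  have hu0 : v 0 (q 0) = v 0 x₀ := by rw [hq0]
  have hy0 : deriv (v 0) (q 0) = deriv (v 0) x₀ := by rw [hq0]
  have hry : r * deriv (v 0) x₀ < -|v 0 x₀| := by
    have h := mul_lt_mul_of_pos_left hslope hr0
    have he : r * (-(1 / r) * |v 0 x₀|) = -|v 0 x₀| := by
      field_simp [mul_comm]
    rw [he] at h
    exact h
  have hα0 : α 0 < 0 := by
    rw [hαdef]
    simp only [hu0, hy0]
    have := le_abs_self (v 0 x₀)
    linarith
  have hβ0 : 0 < β 0 := by
    rw [hβdef]
    simp only [hu0, hy0]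
    have := neg_abs_le (v 0 x₀)
    linarith
  exact ode_blowup (r/2) hκ α β A B h1 h2 h3 h4 hα0 hβ0
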